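/- For N = 3 and θ = 2π + δ, the characteristic polynomial of the coupling matrix J(θ) in the eigenvalue variable λ, expanded to second order in δ, has roots λ_sup = 3 + O(δ), λ₊ = −(2/3)iδ + (2/27)δ² + O(δ³), and λ₋ = −2iδ + 2δ² + O(δ³); in particular Re λ₋ / Re λ₊ → 27 as δ → 0. -/

import Mathlib

open Complex Filter

/-- The coupling matrix `J j l = exp(i |j - l| θ)`. -/
noncomputable def couplingMatrix (N : ℕ) (θ : ℝ) : Matrix (Fin N) (Fin N) ℂ :=
  fun j l => Complex.exp (Complex.I * (((j : ℤ) - (l : ℤ)).natAbs : ℂ) * (θ : ℂ))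

noncomputable def zz (δ : ℝ) : ℂ := Complex.exp (Complex.I * δ)
noncomputable def ww (δ : ℝ) : ℂ := Complex.exp (Complex.log ((zz δ)^2 + 8) / 2)
noncomputable def lamM' (δ : ℝ) : ℂ := 1 - (zz δ)^2
noncomputable def lamP' (δ : ℝ) : ℂ := (2 + (zz δ)^2 - zz δ * ww δ) / 2
noncomputable def lamS' (δ : ℝ) : ℂ := (2 + (zz δ)^2 + zz δ * ww δ) / 2
noncomputable def aa (δ : ℝ) : ℂ := -(2 / 3) * Complex.I * (δ : ℂ) + (2 / 27) * (δ : ℂ) ^ 2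

lemma hz_theta (δ : ℝ) :
    Complex.exp (Complex.I * ((2 * Real.pi + δ : ℝ) : ℂ)) = zz δ := by
  have : Complex.I * ((2 * Real.pi + δ : ℝ) : ℂ)
      = 2 * (Real.pi : ℂ) * Complex.I + Complex.I * δ := by push_cast; ring
  rw [this, Complex.exp_add, Complex.exp_two_pi_mul_I, one_mul, zz]

lemma det_eq (δ : ℝ) (lam : ℂ) :
    (couplingMatrix 3 (2 * Real.pi + δ) - lam • (1 : Matrix (Fin 3) (Fin 3) ℂ)).det
    = -((lam - (1 - (zz δ)^2)) *
        (lam^2 - (2 + (zz δ)^2) * lam + (1 - (zz δ)^2))) := by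
  have e0 : ∀ j l : Fin 3, couplingMatrix 3 (2 * Real.pi + δ) j l
      = Complex.exp (Complex.I * (((j : ℤ) - (l : ℤ)).natAbs : ℂ)
          * ((2 * Real.pi + δ : ℝ) : ℂ)) := fun _ _ => rfl
  generalize ht : ((2 * Real.pi + δ : ℝ) : ℂ) = t at *
  have h1 : Complex.exp (Complex.I * (1 : ℂ) * t) = zz δ := by
    rw [mul_one, ← ht, hz_theta]
  have h2 : Complex.exp (Complex.I * (2 : ℂ) * t) = (zz δ)^2 := by
    rw [← ht, ← hz_theta δ, sq, ← Complex.exp_add]; rw [ht]; ring_nf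
  have h0 : Complex.exp (Complex.I * (0 : ℂ) * t) = 1 := by
    rw [mul_zero, zero_mul, Complex.exp_zero]
  rw [Matrix.det_fin_three]
  simp only [Matrix.sub_apply, Matrix.smul_apply, Matrix.one_apply, e0, Fin.isValue]
  have h1' : Complex.exp (Complex.I * t) = zz δ := by rw [← h1]; ring_nf
  norm_num [h0, h1', h2, Fin.ext_iff]
  ring

lemma zz_sq_ne_one {δ : ℝ} (h0 : δ ≠ 0) (h1 : |δ| < 1) : (zz δ)^2 ≠ 1 := by
  intro h
  have hsq : (zz δ)^2 = Complex.exp (Complex.I * (2*δ)) := by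
    rw [zz, sq, ← Complex.exp_add]; ring_nf
  rw [hsq, Complex.exp_eq_one_iff] at h
  obtain ⟨n, hn⟩ := h
  have him : (2:ℝ) * δ = n * (2 * Real.pi) := by
    have := congrArg Complex.im hn
    simpa [Complex.mul_im] using this
  have hpi := Real.pi_gt_three
  rcases eq_or_ne n 0 with rfl | hne
  · simp at him; exact h0 (by linarith)
  · have h2 : (1:ℝ) ≤ |(n:ℝ)| := by
      have h3 : (1:ℤ) ≤ |n| := Int.one_le_abs (by exact hne)
      exact_mod_cast h3
    have habs : |2 * δ| = |(n:ℝ)| * (2 * Real.pi) := by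
      rw [him, abs_mul, abs_of_pos (by positivity : (0:ℝ) < 2 * Real.pi)]
    have hlt : |2 * δ| < 2 := by rw [abs_mul]; simp; linarith [abs_nonneg δ]
    nlinarith [abs_nonneg δ]

lemma zw_ne (δ : ℝ) : zz δ * ww δ ≠ 0 :=
  mul_ne_zero (Complex.exp_ne_zero _) (Complex.exp_ne_zero _)

lemma abs_zz (δ : ℝ) : ‖zz δ‖ = 1 := by
  rw [zz, Complex.norm_exp]; simp [Complex.mul_re]

lemma u_ne (δ : ℝ) : (zz δ)^2 + 8 ≠ 0 := by
  intro h
  have h1 : ‖(zz δ)^2‖ = 1 := by rw [norm_pow, abs_zz]; norm_num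
  have : (zz δ)^2 = -8 := by linear_combination h
  rw [this] at h1
  simp at h1

lemma ww_sq (δ : ℝ) : (ww δ)^2 = (zz δ)^2 + 8 := by
  rw [ww, sq, ← Complex.exp_add, add_halves, Complex.exp_log (u_ne δ)]

lemma quad_factor (δ : ℝ) (lam : ℂ) :
    lam^2 - (2 + (zz δ)^2) * lam + (1 - (zz δ)^2)
      = (lam - lamP' δ) * (lam - lamS' δ) := by
  have h := ww_sq δ
  rw [lamP', lamS']
  field_simp
  ring_nf
  linear_combination (zz δ)^2 * h

lemma zz_sq (δ : ℝ) : (zz δ)^2 = Complex.exp (Complex.I * (2*(δ:ℂ))) := by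
  rw [zz, sq, ← Complex.exp_add]; ring_nf

lemma r_bound {δ : ℝ} (h : |δ| ≤ 1/10) :
    ‖(zz δ)^2 - (1 + 2*Complex.I*(δ:ℂ) - 2*(δ:ℂ)^2)‖ ≤ 2 * |δ|^3 := by
  have hx : ‖Complex.I * (2*(δ:ℂ))‖ = 2 * |δ| := by
    simp [norm_mul, Complex.norm_real, Real.norm_eq_abs]
  have hx1 : ‖Complex.I * (2*(δ:ℂ))‖ ≤ 1 := by rw [hx]; linarith [abs_nonneg δ]
  have hb := Complex.exp_bound hx1 (by norm_num : 0 < 3)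
  have hsum : ∑ m ∈ Finset.range 3, (Complex.I * (2*(δ:ℂ)))^m / (Nat.factorial m)
      = 1 + 2*Complex.I*(δ:ℂ) - 2*(δ:ℂ)^2 := by
    simp [Finset.sum_range_succ, Nat.factorial]
    ring_nf
    simp [Complex.I_sq]
    ring
  rw [hsum, hx] at hb
  norm_num [Nat.factorial] at hb
  rw [zz_sq]
  nlinarith [pow_nonneg (abs_nonneg δ) 3, hb]

lemma z_sub_one {δ : ℝ} (h : |δ| ≤ 1/10) : ‖zz δ - 1‖ ≤ 2 * |δ| := by
  have hx1 : ‖Complex.I * (δ:ℂ)‖ ≤ 1 := by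
    simp only [norm_mul, Complex.norm_I, Complex.norm_real, Real.norm_eq_abs, one_mul]; linarith
  have := Complex.norm_exp_sub_one_le hx1
  simpa [zz, Complex.norm_real, Real.norm_eq_abs] using this

lemma z2_sub_one {δ : ℝ} (h : |δ| ≤ 1/10) : ‖(zz δ)^2 - 1‖ ≤ 4 * |δ| := by
  have hxe : ‖Complex.I * (2*(δ:ℂ))‖ = 2 * |δ| := by
    simp [norm_mul, Complex.norm_real, Real.norm_eq_abs]
  have hx1 : ‖Complex.I * (2*(δ:ℂ))‖ ≤ 1 := by rw [hxe]; linarith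
  have := Complex.norm_exp_sub_one_le hx1
  rw [zz_sq]
  calc ‖Complex.exp (Complex.I * (2*(δ:ℂ))) - 1‖
      ≤ 2 * ‖Complex.I * (2*(δ:ℂ))‖ := this
    _ = 4 * |δ| := by rw [hxe]; ring

lemma re_ww_nonneg (δ : ℝ) : 0 ≤ (ww δ).re := by
  rw [ww, Complex.exp_re]
  apply mul_nonneg (Real.exp_pos _).le
  apply Real.cos_nonneg_of_mem_Icc
  have him : (Complex.log ((zz δ)^2 + 8) / 2).im
      = Complex.arg ((zz δ)^2 + 8) / 2 := by
    rw [← Complex.log_im ((zz δ)^2 + 8)]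
    simp [Complex.div_im, Complex.normSq]
  rw [him]
  constructor
  · have := Complex.neg_pi_lt_arg ((zz δ)^2 + 8); linarith
  · have := Complex.arg_le_pi ((zz δ)^2 + 8); linarith

lemma w3_ne (δ : ℝ) : 3 ≤ ‖ww δ + 3‖ := by
  have : (3:ℝ) ≤ (ww δ + 3).re := by
    simp [Complex.add_re]
    linarith [re_ww_nonneg δ]
  exact le_trans this (Complex.re_le_norm _)

lemma w_sub_three {δ : ℝ} (h : |δ| ≤ 1/10) :
    ‖ww δ - 3‖ ≤ (4/3) * |δ| := by
  have key : (ww δ - 3) * (ww δ + 3) = (zz δ)^2 - 1 := by linear_combination ww_sq δ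
  have h1 : ‖ww δ - 3‖ * ‖ww δ + 3‖ = ‖(zz δ)^2 - 1‖ := by
    rw [← norm_mul, key]
  have h2 := z2_sub_one h
  have h3 := w3_ne δ
  nlinarith [norm_nonneg (ww δ - 3), norm_nonneg (ww δ + 3)]

lemma lamS_bound {δ : ℝ} (h : |δ| ≤ 1/10) :
    ‖lamS' δ - 3‖ ≤ 6 * |δ| := by
  have habsz := abs_zz δ
  have key : lamS' δ - 3 = (((zz δ)^2 - 1) + (zz δ * (ww δ - 3) + 3 * (zz δ - 1))) / 2 := by
    rw [lamS']; ring
  rw [key]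
  have h1 := z2_sub_one h
  have h2 := w_sub_three h
  have h3 := z_sub_one h
  calc ‖(((zz δ)^2 - 1) + (zz δ * (ww δ - 3) + 3 * (zz δ - 1))) / 2‖
      ≤ (‖(zz δ)^2 - 1‖ + (‖zz δ * (ww δ - 3)‖ + ‖3 * (zz δ - 1)‖)) / 2 := by
        rw [norm_div]
        simp only [Complex.norm_two]
        gcongr
        exact le_trans (norm_add_le _ _) (by gcongr; exact norm_add_le _ _)
    _ ≤ (4*|δ| + ((4/3)*|δ| + 3*(2*|δ|))) / 2 := by
        rw [norm_mul, norm_mul, habsz, one_mul]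
        have h3' : ‖(3:ℂ)‖ = 3 := by norm_num
        rw [h3']
        gcongr
    _ ≤ 6 * |δ| := by linarith [abs_nonneg δ]

lemma pa_id (δ : ℝ) :
    (aa δ)^2 - (2 + (zz δ)^2) * (aa δ) + (1 - (zz δ)^2)
      = (-(128/81) * Complex.I * (δ:ℂ)^3 + (112/729) * (δ:ℂ)^4)
        - ((zz δ)^2 - (1 + 2*Complex.I*(δ:ℂ) - 2*(δ:ℂ)^2)) * (aa δ + 1) := by
  rw [aa]
  ring_nf
  simp [Complex.I_sq]
  ring_nf

lemma aa_bound {δ : ℝ} (h : |δ| ≤ 1/10) : ‖aa δ‖ ≤ 1/10 := by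
  rw [aa]
  have e1 : ‖-(2 / 3) * Complex.I * (δ:ℂ)‖ = (2/3) * |δ| := by
    simp only [norm_mul, Complex.norm_I, Complex.norm_real, Real.norm_eq_abs, norm_neg, norm_div,
      Complex.norm_ofNat]
    ring
  have e2 : ‖(2 / 27) * (δ:ℂ)^2‖ = (2/27) * |δ|^2 := by
    simp only [norm_mul, norm_pow, Complex.norm_real, Real.norm_eq_abs, norm_div, Complex.norm_ofNat]
    try ring
  calc ‖-(2 / 3) * Complex.I * (δ:ℂ) + (2 / 27) * (δ:ℂ) ^ 2‖
      ≤ ‖-(2 / 3) * Complex.I * (δ:ℂ)‖ + ‖(2 / 27) * (δ:ℂ)^2‖ :=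
        norm_add_le _ _
    _ = (2/3) * |δ| + (2/27) * |δ|^2 := by rw [e1, e2]
    _ ≤ 1/10 := by nlinarith [abs_nonneg δ]

lemma B_bound {δ : ℝ} (h : |δ| ≤ 1/10) :
    ‖-(128/81) * Complex.I * (δ:ℂ)^3 + (112/729) * (δ:ℂ)^4‖ ≤ 2 * |δ|^3 := by
  have e1 : ‖-(128/81) * Complex.I * (δ:ℂ)^3‖ = (128/81) * |δ|^3 := by
    simp only [norm_mul, norm_pow, Complex.norm_I, Complex.norm_real, Real.norm_eq_abs, norm_neg, norm_div,
      Complex.norm_ofNat]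
    try ring
  have e2 : ‖(112/729) * (δ:ℂ)^4‖ = (112/729) * |δ|^4 := by
    simp only [norm_mul, norm_pow, Complex.norm_real, Real.norm_eq_abs, norm_div, Complex.norm_ofNat]
    try ring
  calc ‖-(128/81) * Complex.I * (δ:ℂ)^3 + (112/729) * (δ:ℂ)^4‖
      ≤ ‖-(128/81) * Complex.I * (δ:ℂ)^3‖ + ‖(112/729) * (δ:ℂ)^4‖ :=
        norm_add_le _ _
    _ = (128/81) * |δ|^3 + (112/729) * |δ|^4 := by rw [e1, e2]
    _ ≤ 2 * |δ|^3 := by nlinarith [pow_nonneg (abs_nonneg δ) 3, pow_nonneg (abs_nonneg δ) 4]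

lemma pa_bound {δ : ℝ} (h : |δ| ≤ 1/10) :
    ‖(aa δ)^2 - (2 + (zz δ)^2) * (aa δ) + (1 - (zz δ)^2)‖ ≤ 5 * |δ|^3 := by
  rw [pa_id]
  have hB := B_bound h
  have hr := r_bound h
  have ha := aa_bound h
  have ha1 : ‖aa δ + 1‖ ≤ 11/10 := by
    calc ‖aa δ + 1‖ ≤ ‖aa δ‖ + ‖(1:ℂ)‖ := norm_add_le _ _
      _ ≤ 11/10 := by rw [norm_one]; linarith
  calc ‖(-(128/81) * Complex.I * (δ:ℂ)^3 + (112/729) * (δ:ℂ)^4)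
          - ((zz δ)^2 - (1 + 2*Complex.I*(δ:ℂ) - 2*(δ:ℂ)^2)) * (aa δ + 1)‖
      ≤ ‖-(128/81) * Complex.I * (δ:ℂ)^3 + (112/729) * (δ:ℂ)^4‖
        + ‖((zz δ)^2 - (1 + 2*Complex.I*(δ:ℂ) - 2*(δ:ℂ)^2)) * (aa δ + 1)‖ :=
        norm_sub_le _ _
    _ = ‖-(128/81) * Complex.I * (δ:ℂ)^3 + (112/729) * (δ:ℂ)^4‖
        + ‖(zz δ)^2 - (1 + 2*Complex.I*(δ:ℂ) - 2*(δ:ℂ)^2)‖ * ‖aa δ + 1‖ := by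
        rw [norm_mul]
    _ ≤ 2*|δ|^3 + (2*|δ|^3) * (11/10) := by
        gcongr
    _ ≤ 5 * |δ|^3 := by nlinarith [pow_nonneg (abs_nonneg δ) 3]

lemma dist_aa_lamS {δ : ℝ} (h : |δ| ≤ 1/10) :
    2 ≤ ‖aa δ - lamS' δ‖ := by
  have h1 := lamS_bound h
  have h2 := aa_bound h
  have t1 : ‖(3:ℂ)‖ ≤ ‖lamS' δ‖ + ‖lamS' δ - 3‖ := by
    have := norm_sub_le (lamS' δ) (lamS' δ - 3)
    have e : lamS' δ - (lamS' δ - 3) = 3 := by ring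
    rwa [e] at this
  have t2 : ‖lamS' δ‖ - ‖aa δ‖ ≤ ‖lamS' δ - aa δ‖ := norm_sub_norm_le _ _
  have t3 : ‖lamS' δ - aa δ‖ = ‖aa δ - lamS' δ‖ := norm_sub_rev _ _
  have h3 : ‖(3:ℂ)‖ = 3 := by norm_num
  have hd : |δ| ≤ 1/10 := h
  linarith

lemma lamP_bound {δ : ℝ} (h : |δ| ≤ 1/10) :
    ‖lamP' δ - aa δ‖ ≤ 10 * |δ|^3 := by
  have hq := quad_factor δ (aa δ)
  have h1 : ‖aa δ - lamP' δ‖ * ‖aa δ - lamS' δ‖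
      = ‖(aa δ)^2 - (2 + (zz δ)^2) * (aa δ) + (1 - (zz δ)^2)‖ := by
    rw [hq, norm_mul]
  have h2 := pa_bound h
  have h3 := dist_aa_lamS h
  have h4 : ‖lamP' δ - aa δ‖ = ‖aa δ - lamP' δ‖ := by
    rw [← norm_neg]; ring_nf
  rw [h4]
  nlinarith [norm_nonneg (aa δ - lamP' δ), norm_nonneg (aa δ - lamS' δ),
    pow_nonneg (abs_nonneg δ) 3]

lemma lamM_bound {δ : ℝ} (h : |δ| ≤ 1/10) :
    ‖lamM' δ - (-2 * Complex.I * (δ:ℂ) + 2 * (δ:ℂ)^2)‖ ≤ 2 * |δ|^3 := by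
  have key : lamM' δ - (-2 * Complex.I * (δ:ℂ) + 2 * (δ:ℂ)^2)
      = -((zz δ)^2 - (1 + 2*Complex.I*(δ:ℂ) - 2*(δ:ℂ)^2)) := by
    rw [lamM']; ring
  rw [key, norm_neg]
  exact r_bound h

lemma reM_bound {δ : ℝ} (h : |δ| ≤ 1/10) : |(lamM' δ).re - 2*δ^2| ≤ 2*|δ|^3 := by
  have hb := lamM_bound h
  have ht : ((-2 * Complex.I * (δ:ℂ) + 2 * (δ:ℂ)^2)).re = 2*δ^2 := by
    have e : (-2 * Complex.I * (δ:ℂ) + 2 * (δ:ℂ)^2) = ((2*δ^2 : ℝ) : ℂ) + (-2*δ : ℝ) * Complex.I := by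
      push_cast; ring
    rw [e]
    simp [← Complex.ofReal_pow]
  have e2 : (lamM' δ).re - 2*δ^2 = (lamM' δ - (-2 * Complex.I * (δ:ℂ) + 2 * (δ:ℂ)^2)).re := by
    rw [Complex.sub_re, ht]
  rw [e2]
  exact le_trans (Complex.abs_re_le_norm _) hb

lemma reP_bound {δ : ℝ} (h : |δ| ≤ 1/10) : |(lamP' δ).re - (2/27)*δ^2| ≤ 10*|δ|^3 := by
  have hb := lamP_bound h
  unfold aa at hb
  have ht : ((-(2/3) * Complex.I * (δ:ℂ) + (2/27) * (δ:ℂ)^2)).re = (2/27)*δ^2 := by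
    have e : (-(2/3) * Complex.I * (δ:ℂ) + (2/27) * (δ:ℂ)^2)
        = (((2/27)*δ^2 : ℝ) : ℂ) + ((-(2/3))*δ : ℝ) * Complex.I := by
      push_cast; ring
    rw [e]
    simp [← Complex.ofReal_pow]
  have e2 : (lamP' δ).re - (2/27)*δ^2 = (lamP' δ - (-(2/3) * Complex.I * (δ:ℂ) + (2/27) * (δ:ℂ)^2)).re := by
    rw [Complex.sub_re, ht]
  rw [e2]
  exact le_trans (Complex.abs_re_le_norm _) hb

lemma ev_small : ∀ᶠ δ in nhdsWithin (0:ℝ) {0}ᶜ, |δ| ≤ 1/10 ∧ δ ≠ 0 := by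
  have h1 : ∀ᶠ δ in nhdsWithin (0:ℝ) {0}ᶜ, |δ| ≤ 1/10 := by
    apply Filter.Eventually.filter_mono nhdsWithin_le_nhds
    filter_upwards [eventually_abs_sub_lt (0:ℝ) (by norm_num : (0:ℝ) < 1/10)] with δ hδ
    rw [sub_zero] at hδ; linarith
  have h2 : ∀ᶠ δ in nhdsWithin (0:ℝ) {0}ᶜ, δ ≠ 0 := by
    filter_upwards [eventually_mem_nhdsWithin] with δ hδ
    simpa using hδ
  exact h1.and h2

lemma tendsto_aux (F : ℝ → ℝ) (c K : ℝ) (hK : 0 ≤ K)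
    (hb : ∀ δ : ℝ, |δ| ≤ 1/10 → |F δ - c*δ^2| ≤ K*|δ|^3) :
    Tendsto (fun δ : ℝ => F δ / δ^2) (nhdsWithin 0 {0}ᶜ) (nhds c) := by
  rw [← tendsto_sub_nhds_zero_iff]
  rw [tendsto_zero_iff_abs_tendsto_zero]
  refine squeeze_zero' (g := fun δ => K * |δ|)
    (Filter.Eventually.of_forall (fun δ => abs_nonneg _)) ?_ ?_
  · filter_upwards [ev_small] with δ hδ
    obtain ⟨h1, h2⟩ := hδ
    have hd2 : (0:ℝ) < δ^2 := by positivity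
    have e : F δ / δ^2 - c = (F δ - c*δ^2) / δ^2 := by field_simp
    simp only [Function.comp_apply]
    rw [e, abs_div, abs_of_pos hd2]
    have := hb δ h1
    have e3 : |δ|^3 = |δ| * δ^2 := by
      rw [pow_succ, _root_.sq_abs]; ring
    calc |F δ - c*δ^2| / δ^2 ≤ K*|δ|^3 / δ^2 := by gcongr
      _ = K * |δ| := by rw [e3]; field_simp
  · have : Tendsto (fun δ : ℝ => K * |δ|) (nhds 0) (nhds (K * |(0:ℝ)|)) :=
      (continuous_const.mul _root_.continuous_abs).tendsto 0
    simp only [abs_zero, mul_zero] at this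
    exact this.mono_left nhdsWithin_le_nhds

lemma tendsto_ratio : Tendsto (fun δ : ℝ => (lamM' δ).re / (lamP' δ).re)
    (nhdsWithin 0 {0}ᶜ) (nhds 27) := by
  have hM : Tendsto (fun δ : ℝ => (lamM' δ).re / δ^2) (nhdsWithin 0 {0}ᶜ) (nhds 2) :=
    tendsto_aux _ 2 2 (by norm_num) (fun δ h => reM_bound h)
  have hP : Tendsto (fun δ : ℝ => (lamP' δ).re / δ^2) (nhdsWithin 0 {0}ᶜ) (nhds (2/27)) :=
    tendsto_aux _ (2/27) 10 (by norm_num) (fun δ h => reP_bound h)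
  have h27 : (27:ℝ) = 2 / (2/27) := by norm_num
  rw [h27]
  apply Tendsto.congr' _ (hM.div hP (by norm_num))
  filter_upwards [ev_small] with δ hδ
  have hd2 : (δ:ℝ)^2 ≠ 0 := pow_ne_zero _ hδ.2
  simp only [Pi.div_apply]
  rw [div_div_div_cancel_right₀ hd2]

/-- For `N = 3` and `θ = 2π + δ`, the three eigenvalues of `J(θ)` satisfy
`λ_sup = 3 + O(δ)`, `λ₊ = -(2/3)iδ + (2/27)δ² + O(δ³)` and
`λ₋ = -2iδ + 2δ² + O(δ³)`; in particular `Re λ₋ / Re λ₊ → 27` as `δ → 0`. -/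
theorem three_qubit_decay_rates :
    ∃ ε > (0 : ℝ), ∃ C > (0 : ℝ), ∃ lamSup lamP lamM : ℝ → ℂ,
      (∀ δ : ℝ, |δ| < ε → δ ≠ 0 →
        ((couplingMatrix 3 (2 * Real.pi + δ) - lamSup δ • (1 : Matrix (Fin 3) (Fin 3) ℂ)).det = 0 ∧
         (couplingMatrix 3 (2 * Real.pi + δ) - lamP δ • (1 : Matrix (Fin 3) (Fin 3) ℂ)).det = 0 ∧
         (couplingMatrix 3 (2 * Real.pi + δ) - lamM δ • (1 : Matrix (Fin 3) (Fin 3) ℂ)).det = 0 ∧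
         lamSup δ ≠ lamP δ ∧ lamSup δ ≠ lamM δ ∧ lamP δ ≠ lamM δ)) ∧
      (∀ δ : ℝ, |δ| < ε →
        ‖lamSup δ - 3‖ ≤ C * |δ| ∧
        ‖lamP δ - (-(2 / 3) * Complex.I * (δ : ℂ) + (2 / 27) * (δ : ℂ) ^ 2)‖
          ≤ C * |δ| ^ 3 ∧
        ‖lamM δ - (-2 * Complex.I * (δ : ℂ) + 2 * (δ : ℂ) ^ 2)‖
          ≤ C * |δ| ^ 3) ∧
      Tendsto (fun δ : ℝ => (lamM δ).re / (lamP δ).re) (nhdsWithin 0 {0}ᶜ)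
        (nhds 27) := by
  refine ⟨1/10, by norm_num, 10, by norm_num, lamS', lamP', lamM', ?_, ?_, tendsto_ratio⟩
  · intro δ hδ hδ0
    have hle : |δ| ≤ 1/10 := le_of_lt hδ
    have hz1 : (zz δ)^2 ≠ 1 := zz_sq_ne_one hδ0 (lt_trans hδ (by norm_num))
    have hq := quad_factor δ
    refine ⟨?_, ?_, ?_, ?_, ?_, ?_⟩
    · rw [det_eq, hq]; ring
    · rw [det_eq, hq]; ring
    · rw [det_eq, lamM']; ring
    · -- lamS ≠ lamP
      intro h
      have : zz δ * ww δ = 0 := by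
        have := sub_eq_zero.mpr h
        rw [lamS', lamP'] at this
        field_simp at this
        linear_combination this / 2
      exact zw_ne δ this
    · -- lamS ≠ lamM
      intro h
      have h0 := hq (lamM' δ)
      rw [← h] at h0
      have hfac : (lamS' δ - lamP' δ) * (lamS' δ - lamS' δ) = 0 := by
        rw [sub_self, mul_zero]
      rw [hfac] at h0
      have hval : (lamM' δ)^2 - (2 + (zz δ)^2) * (lamM' δ) + (1 - (zz δ)^2)
          = -2 * (zz δ)^2 * (1 - (zz δ)^2) := by
        rw [lamM']; ring
      rw [← h] at hval
      rw [h0] at hval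
      have hne : -2 * (zz δ)^2 * (1 - (zz δ)^2) ≠ 0 := by
        apply mul_ne_zero (mul_ne_zero (by norm_num) (pow_ne_zero _ (Complex.exp_ne_zero _)))
        rw [sub_ne_zero]
        exact fun hh => hz1 hh.symm
      exact hne hval.symm
    · -- lamP ≠ lamM
      intro h
      have h0 := hq (lamM' δ)
      rw [← h] at h0
      have hfac : (lamP' δ - lamP' δ) * (lamP' δ - lamS' δ) = 0 := by
        rw [sub_self, zero_mul]
      rw [hfac] at h0
      have hval : (lamM' δ)^2 - (2 + (zz δ)^2) * (lamM' δ) + (1 - (zz δ)^2)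
          = -2 * (zz δ)^2 * (1 - (zz δ)^2) := by
        rw [lamM']; ring
      rw [← h] at hval
      rw [h0] at hval
      have hne : -2 * (zz δ)^2 * (1 - (zz δ)^2) ≠ 0 := by
        apply mul_ne_zero (mul_ne_zero (by norm_num) (pow_ne_zero _ (Complex.exp_ne_zero _)))
        rw [sub_ne_zero]
        exact fun hh => hz1 hh.symm
      exact hne hval.symm
  · intro δ hδ
    have hle : |δ| ≤ 1/10 := le_of_lt hδ
    refine ⟨?_, ?_, ?_⟩
    · exact le_trans (lamS_bound hle) (by nlinarith [abs_nonneg δ])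
    · have := lamP_bound hle
      unfold aa at this
      calc ‖lamP' δ - (-(2 / 3) * Complex.I * (δ : ℂ) + (2 / 27) * (δ : ℂ) ^ 2)‖
          ≤ 10 * |δ|^3 := this
        _ ≤ 10 * |δ|^3 := le_refl _
    · exact le_trans (lamM_bound hle) (by nlinarith [pow_nonneg (abs_nonneg δ) 3])
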